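/- arXiv:2407.01816 — 2 statements merged into one kernel-verified Lean document; each statement's English description precedes it below -/
import Mathlib

section
/- Assume the L log L condition Σ_{k=1}^∞ k·(log k)·p_k < ∞. Then for every c > 0, ∫_0^∞ φ(e^{−ct}) dt < ∞. -/
open scoped ENNReal
open MeasureTheory Set Real

private lemma aux_pow_le (n : ℕ) {u : ℝ} (h0 : 0 ≤ u) (h1 : u ≤ 1) :
    (1 - u) ^ n ≤ 1 - n * u + (n : ℝ) ^ 2 / 2 * u ^ 2 := by
  induction n with
  | zero => simp
  | succ k ih =>
    have h2 : (0:ℝ) ≤ 1 - u := by linarith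
    rw [pow_succ]
    have h4 : (1-u)^k * (1-u) ≤ (1 - k*u + (k:ℝ)^2/2*u^2) * (1-u) :=
      mul_le_mul_of_nonneg_right ih h2
    push_cast
    nlinarith [sq_nonneg u, mul_nonneg (mul_nonneg (sq_nonneg (k:ℝ)) (sq_nonneg u)) h0]

private lemma aux_smin (p : ℕ → ℝ) (hp : ∀ k, 0 ≤ p k)
    (hS : Summable fun k : ℕ => (k : ℝ) * p k) {u : ℝ} (hu : 0 ≤ u) :
    Summable fun k : ℕ => p k * min (k:ℝ) ((k:ℝ)^2/2*u) := by
  apply Summable.of_nonneg_of_le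
    (fun k => mul_nonneg (hp k) (le_min (Nat.cast_nonneg k) (by positivity)))
    (fun k => ?_) hS
  calc p k * min (k:ℝ) ((k:ℝ)^2/2*u) ≤ p k * (k:ℝ) :=
        mul_le_mul_of_nonneg_left (min_le_left _ _) (hp k)
    _ = (k:ℝ) * p k := by ring

private lemma aux_phi_le (p : ℕ → ℝ) (hp : ∀ k, 0 ≤ p k) (hsum : HasSum p 1)
    (m : ℝ) (hm : HasSum (fun k : ℕ => (k : ℝ) * p k) m)
    (β : ℝ) (hβ : 0 < β) (α : ℝ) (hα : α = β * (1 - m))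
    (φ : ℝ → ℝ)
    (hφ : ∀ u ∈ Set.Ioc (0:ℝ) 1,
      φ u = β * ((∑' k : ℕ, p k * (1 - u) ^ k) - (1 - u)) / u - α)
    {u : ℝ} (hu0 : 0 < u) (hu1 : u < 1) :
    φ u ≤ β * ∑' k : ℕ, p k * min (k : ℝ) ((k : ℝ)^2 / 2 * u) := by
  have hv0 : (0:ℝ) ≤ 1 - u := by linarith
  have hv1 : 1 - u ≤ 1 := by linarith
  set g : ℕ → ℝ := fun k => (1 - u)^k - 1 + k * u with hg
  have hg0 : ∀ k, 0 ≤ g k := by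
    intro k
    have h := one_add_mul_le_pow (a := -u) (by linarith : (-2:ℝ) ≤ -u) k
    rw [show (1:ℝ) + -u = 1 - u by ring] at h
    simp only [hg]
    nlinarith
  have hgle : ∀ k, g k ≤ u * min (k : ℝ) ((k:ℝ)^2/2 * u) := by
    intro k
    rw [mul_min_of_nonneg _ _ hu0.le]
    apply le_min
    · have : (1-u)^k ≤ 1 := pow_le_one₀ hv0 hv1
      simp only [hg]; nlinarith
    · have := aux_pow_le k hu0.le hu1.le
      simp only [hg]; nlinarith
  have S1 : Summable fun k => p k * (1-u)^k := by
    apply Summable.of_nonneg_of_le (fun k => mul_nonneg (hp k) (pow_nonneg hv0 _))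
      (fun k => ?_) hsum.summable
    exact mul_le_of_le_one_right (hp k) (pow_le_one₀ hv0 hv1)
  have S2 := hm.summable
  have S3 : Summable fun k => p k * g k := by
    apply Summable.of_nonneg_of_le (fun k => mul_nonneg (hp k) (hg0 k))
      (fun k => ?_) (S2.mul_left u)
    calc p k * g k ≤ p k * (u * min (k:ℝ) ((k:ℝ)^2/2*u)) :=
          mul_le_mul_of_nonneg_left (hgle k) (hp k)
      _ ≤ p k * (u * (k:ℝ)) := by
          apply mul_le_mul_of_nonneg_left _ (hp k)
          exact mul_le_mul_of_nonneg_left (min_le_left _ _) hu0.le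
      _ = u * ((k:ℝ) * p k) := by ring
  have Smin : Summable fun k => p k * min (k:ℝ) ((k:ℝ)^2/2*u) := aux_smin p hp S2 hu0.le
  have htsumS : ∑' k, p k * g k = (∑' k, p k * (1-u)^k) - 1 + u * m := by
    have h1 : ∀ k : ℕ, p k * g k = (p k * (1-u)^k - p k) + u * ((k:ℝ) * p k) := by
      intro k; simp only [hg]; ring
    rw [tsum_congr h1, Summable.tsum_add (S1.sub hsum.summable) (S2.mul_left u),
      Summable.tsum_sub S1 hsum.summable, tsum_mul_left, hsum.tsum_eq, hm.tsum_eq]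
  have hφu : φ u = β * (∑' k, p k * g k) / u := by
    rw [hφ u ⟨hu0, hu1.le⟩, htsumS, hα]
    field_simp
    ring
  rw [hφu]
  have hSle : (∑' k, p k * g k) ≤ u * ∑' k, p k * min (k:ℝ) ((k:ℝ)^2/2*u) := by
    calc (∑' k, p k * g k) ≤ ∑' k, p k * (u * min (k:ℝ) ((k:ℝ)^2/2*u)) := by
          apply Summable.tsum_le_tsum (fun k => mul_le_mul_of_nonneg_left (hgle k) (hp k)) S3
          · exact (Smin.mul_left u).congr (fun k => by ring)
      _ = u * ∑' k, p k * min (k:ℝ) ((k:ℝ)^2/2*u) := by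
          rw [← tsum_mul_left]; exact tsum_congr fun k => by ring
  calc β * (∑' k, p k * g k) / u
      ≤ β * (u * ∑' k, p k * min (k:ℝ) ((k:ℝ)^2/2*u)) / u := by gcongr
    _ = β * ∑' k, p k * min (k:ℝ) ((k:ℝ)^2/2*u) := by field_simp

private lemma aux_exp_int {c : ℝ} (hc : 0 < c) (T : ℝ) :
    ∫ t in Ioi T, Real.exp (-(c * t)) = Real.exp (-(c * T)) / c := by
  have := MeasureTheory.integral_comp_mul_left_Ioi (fun x => Real.exp (-x)) T hc
  simp only [smul_eq_mul] at this
  rw [this, integral_exp_neg_Ioi]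
  field_simp

private lemma aux_perk {c β : ℝ} (hc : 0 < c) (hβ : 0 < β) {pk : ℝ} (hpk : 0 ≤ pk) (k : ℕ) :
    (∫⁻ t in Ioi (0:ℝ),
        ENNReal.ofReal (β * (pk * min (k:ℝ) ((k:ℝ)^2/2 * Real.exp (-(c*t)))))) ≤
      ENNReal.ofReal (β * pk * ((k:ℝ) * Real.log k / c + (k:ℝ)/(2*c))) := by
  rcases Nat.eq_zero_or_pos k with rfl | hk
  · simp
  have hK : (1:ℝ) ≤ (k:ℝ) := by exact_mod_cast hk
  set K : ℝ := (k:ℝ) with hKdef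
  have hK0 : 0 < K := by linarith
  have hlogK : 0 ≤ Real.log K := Real.log_nonneg hK
  set T : ℝ := Real.log K / c with hT
  have hT0 : 0 ≤ T := div_nonneg hlogK hc.le
  have hpt : ∀ t ∈ Ioi (0:ℝ),
      ENNReal.ofReal (β * (pk * min K (K^2/2 * Real.exp (-(c*t))))) ≤
        (Ioc (0:ℝ) T).indicator (fun _ => ENNReal.ofReal (β * pk * K)) t +
        (Ioi T).indicator (fun t => ENNReal.ofReal (β * (pk * (K^2/2 * Real.exp (-(c*t)))))) t := by
    intro t ht
    by_cases htT : t ≤ T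
    · calc ENNReal.ofReal (β * (pk * min K (K^2/2 * Real.exp (-(c*t)))))
          ≤ (Ioc (0:ℝ) T).indicator (fun _ => ENNReal.ofReal (β * pk * K)) t := by
            rw [Set.indicator_of_mem (Set.mem_Ioc.mpr ⟨ht, htT⟩)]
            apply ENNReal.ofReal_le_ofReal
            calc β * (pk * min K (K^2/2 * Real.exp (-(c*t))))
                ≤ β * (pk * K) := by
                  apply mul_le_mul_of_nonneg_left _ hβ.le
                  exact mul_le_mul_of_nonneg_left (min_le_left _ _) hpk
              _ = β * pk * K := by ring
        _ ≤ _ := le_self_add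
    · push_neg at htT
      calc ENNReal.ofReal (β * (pk * min K (K^2/2 * Real.exp (-(c*t)))))
          ≤ (Ioi T).indicator (fun t => ENNReal.ofReal (β * (pk * (K^2/2 * Real.exp (-(c*t)))))) t := by
            rw [Set.indicator_of_mem (Set.mem_Ioi.mpr htT)]
            apply ENNReal.ofReal_le_ofReal
            apply mul_le_mul_of_nonneg_left _ hβ.le
            exact mul_le_mul_of_nonneg_left (min_le_right _ _) hpk
        _ ≤ _ := le_add_self
  have hmeas1 : Measurable ((Ioc (0:ℝ) T).indicator
      (fun _ : ℝ => ENNReal.ofReal (β * pk * K))) :=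
    measurable_const.indicator measurableSet_Ioc
  calc (∫⁻ t in Ioi (0:ℝ),
        ENNReal.ofReal (β * (pk * min K (K^2/2 * Real.exp (-(c*t))))))
      ≤ ∫⁻ t in Ioi (0:ℝ),
          ((Ioc (0:ℝ) T).indicator (fun _ => ENNReal.ofReal (β * pk * K)) t +
          (Ioi T).indicator (fun t => ENNReal.ofReal (β * (pk * (K^2/2 * Real.exp (-(c*t)))))) t) :=
        setLIntegral_mono' measurableSet_Ioi hpt
    _ = (∫⁻ t in Ioi (0:ℝ),
          (Ioc (0:ℝ) T).indicator (fun _ => ENNReal.ofReal (β * pk * K)) t) +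
        ∫⁻ t in Ioi (0:ℝ),
          (Ioi T).indicator (fun t => ENNReal.ofReal (β * (pk * (K^2/2 * Real.exp (-(c*t)))))) t :=
        lintegral_add_left hmeas1 _
    _ ≤ ENNReal.ofReal (β * pk * (K * Real.log K / c + K/(2*c))) := by
        rw [lintegral_indicator measurableSet_Ioc, lintegral_indicator measurableSet_Ioi,
          Measure.restrict_restrict measurableSet_Ioc,
          Measure.restrict_restrict measurableSet_Ioi,
          Set.inter_eq_self_of_subset_left Set.Ioc_subset_Ioi_self,
          Set.inter_eq_self_of_subset_left (Set.Ioi_subset_Ioi hT0)]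
        have h1 : (∫⁻ _ in Ioc (0:ℝ) T, ENNReal.ofReal (β * pk * K)) =
            ENNReal.ofReal (β * pk * K * T) := by
          rw [setLIntegral_const, Real.volume_Ioc, ← ENNReal.ofReal_mul (by positivity)]
          norm_num
        have hint : IntegrableOn (fun t => β * (pk * (K^2/2 * Real.exp (-(c*t))))) (Ioi T) := by
          have heq : (fun t : ℝ => β * (pk * (K^2/2 * Real.exp (-(c*t))))) =
              fun t : ℝ => (β * (pk * (K^2/2))) * Real.exp (-c*t) := by
            funext t; rw [neg_mul]; ring
          rw [heq]
          exact (exp_neg_integrableOn_Ioi T hc).const_mul _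
        have h2 : (∫⁻ t in Ioi T, ENNReal.ofReal (β * (pk * (K^2/2 * Real.exp (-(c*t)))))) =
            ENNReal.ofReal (β * pk * (K/(2*c))) := by
          rw [← ofReal_integral_eq_lintegral_ofReal hint
            (Filter.Eventually.of_forall fun t => by positivity)]
          congr 1
          have : (∫ t in Ioi T, β * (pk * (K^2/2 * Real.exp (-(c*t))))) =
              β * (pk * (K^2/2)) * ∫ t in Ioi T, Real.exp (-(c*t)) := by
            rw [← integral_const_mul]
            congr 1; ext t; ring
          rw [this, aux_exp_int hc]
          have hcT : c * T = Real.log K := by rw [hT]; field_simp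
          rw [hcT, Real.exp_neg, Real.exp_log hK0]
          field_simp
        rw [h1, h2, ← ENNReal.ofReal_add (by positivity) (by positivity)]
        apply ENNReal.ofReal_le_ofReal
        have : β * pk * K * T = β * pk * (K * Real.log K / c) := by rw [hT]; ring
        rw [this]; ring_nf; rfl

/-- With the notation of the subcritical branching setup: assume the `L log L`
condition `Σ_{k=1}^∞ k·(log k)·p_k < ∞`. Then for every `c > 0`,
`∫_0^∞ φ(e^{−ct}) dt < ∞`. -/
theorem stmt12 (p : ℕ → ℝ) (hp : ∀ k, 0 ≤ p k) (hsum : HasSum p 1)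
    (m : ℝ) (hm : HasSum (fun k : ℕ => (k : ℝ) * p k) m) (hm0 : 0 < m) (hm1 : m < 1)
    (β : ℝ) (hβ : 0 < β) (α : ℝ) (hα : α = β * (1 - m))
    (φ : ℝ → ℝ) (hφ0 : φ 0 = 0)
    (hφ : ∀ u ∈ Set.Ioc (0:ℝ) 1,
      φ u = β * ((∑' k : ℕ, p k * (1 - u) ^ k) - (1 - u)) / u - α)
    (hLlogL : Summable (fun k : ℕ => (k : ℝ) * Real.log k * p k)) :
    ∀ c : ℝ, 0 < c →
      (∫⁻ t in Set.Ioi (0:ℝ), ENNReal.ofReal (φ (Real.exp (-(c * t))))) < ⊤ := by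
  intro c hc
  set F : ℕ → ℝ → ℝ≥0∞ := fun k t =>
    ENNReal.ofReal (β * (p k * min (k:ℝ) ((k:ℝ)^2/2 * Real.exp (-(c*t))))) with hF
  have hFmeas : ∀ k, AEMeasurable (F k) (volume.restrict (Ioi (0:ℝ))) := by
    intro k
    have hcont : Continuous fun t : ℝ =>
        β * (p k * min (k:ℝ) ((k:ℝ)^2/2 * Real.exp (-(c*t)))) := by
      fun_prop
    exact (hcont.measurable.ennreal_ofReal).aemeasurable
  set b : ℕ → ℝ := fun k => β * p k * ((k:ℝ) * Real.log k / c + (k:ℝ)/(2*c)) with hb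
  have hb0 : ∀ k, 0 ≤ b k := by
    intro k
    have h1 : 0 ≤ (k:ℝ) * Real.log k := by
      rcases Nat.eq_zero_or_pos k with rfl | hk
      · simp
      · exact mul_nonneg (Nat.cast_nonneg k)
          (Real.log_nonneg (by exact_mod_cast hk))
    have h2 : 0 ≤ (k:ℝ)/(2*c) := by positivity
    exact mul_nonneg (mul_nonneg hβ.le (hp k))
      (add_nonneg (div_nonneg h1 hc.le) h2)
  have hbsum : Summable b := by
    apply Summable.congr ((hLlogL.mul_left (β/c)).add
      ((hm.summable).mul_left (β/(2*c))))
    intro k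
    simp only [hb]
    field_simp
  calc (∫⁻ t in Set.Ioi (0:ℝ), ENNReal.ofReal (φ (Real.exp (-(c * t)))))
      ≤ ∫⁻ t in Set.Ioi (0:ℝ), ∑' k, F k t := by
        apply setLIntegral_mono' measurableSet_Ioi
        intro t ht
        have ht0 : (0:ℝ) < t := ht
        have hu0 : 0 < Real.exp (-(c*t)) := Real.exp_pos _
        have hu1 : Real.exp (-(c*t)) < 1 := by
          apply Real.exp_lt_one_iff.mpr
          nlinarith
        have hkey := aux_phi_le p hp hsum m hm β hβ α hα φ hφ hu0 hu1
        calc ENNReal.ofReal (φ (Real.exp (-(c * t))))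
            ≤ ENNReal.ofReal (β * ∑' k : ℕ,
                p k * min (k:ℝ) ((k:ℝ)^2/2 * Real.exp (-(c*t)))) :=
              ENNReal.ofReal_le_ofReal hkey
          _ = ∑' k, F k t := by
              rw [← tsum_mul_left]
              exact ENNReal.ofReal_tsum_of_nonneg
                (fun k => mul_nonneg hβ.le (mul_nonneg (hp k)
                  (le_min (Nat.cast_nonneg k) (by positivity))))
                ((aux_smin p hp hm.summable hu0.le).mul_left β)
    _ = ∑' k, ∫⁻ t in Set.Ioi (0:ℝ), F k t := lintegral_tsum hFmeas
    _ ≤ ∑' k, ENNReal.ofReal (b k) :=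
        ENNReal.tsum_le_tsum fun k => aux_perk hc hβ (hp k) k
    _ = ENNReal.ofReal (∑' k, b k) := (ENNReal.ofReal_tsum_of_nonneg hb0 hbsum).symm
    _ < ⊤ := ENNReal.ofReal_lt_top
end

section
/- Let g : [0,∞) → (0,1] be differentiable with g(0) = 1 and g′(t) = −Φ(g(t)) for all t ≥ 0. Then the limit L := lim_{t→∞} e^{αt} g(t) exists in [0,1]; moreover L > 0 if and only if ∫_0^∞ φ(g(s)) ds < ∞, in which case L = exp( −∫_0^∞ φ(g(s)) ds ). -/
open MeasureTheory Filter
open scoped ENNReal Topology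

lemma aux_cont (p : ℕ → ℝ) (hp : ∀ k, 0 ≤ p k) (hs : Summable p) :
    ContinuousOn (fun v : ℝ => ∑' k : ℕ, p k * v ^ k) (Set.Icc 0 1) := by
  rw [continuousOn_iff_continuous_restrict]
  refine continuous_tsum (u := p) (fun k => by continuity) hs ?_
  rintro k ⟨v, hv0, hv1⟩
  rw [Real.norm_eq_abs, abs_mul, abs_of_nonneg (hp k), abs_pow, abs_of_nonneg hv0]
  calc p k * v ^ k ≤ p k * 1 := by
        exact mul_le_mul_of_nonneg_left (pow_le_one₀ hv0 hv1) (hp k)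
    _ = p k := mul_one _

lemma aux_ineq (p : ℕ → ℝ) (hp : ∀ k, 0 ≤ p k) (hsum : HasSum p 1)
    (m : ℝ) (hm : HasSum (fun k : ℕ => (k : ℝ) * p k) m)
    (v : ℝ) (hv : v ∈ Set.Icc (0:ℝ) 1) :
    m * (v - 1) ≤ (∑' k : ℕ, p k * v ^ k) - 1 := by
  obtain ⟨hv0, hv1⟩ := hv
  have hsv : Summable (fun k => p k * v ^ k) := by
    refine Summable.of_nonneg_of_le (fun k => mul_nonneg (hp k) (pow_nonneg hv0 k))
      (fun k => ?_) hsum.summable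
    calc p k * v ^ k ≤ p k * 1 := mul_le_mul_of_nonneg_left (pow_le_one₀ hv0 hv1) (hp k)
      _ = p k := mul_one _
  have h1 : Summable (fun k => p k * v ^ k - p k) := hsv.sub hsum.summable
  have h2 : ∑' k, (p k * v ^ k - p k) = (∑' k : ℕ, p k * v ^ k) - 1 := by
    rw [Summable.tsum_sub hsv hsum.summable, hsum.tsum_eq]
  have h3 : ∑' k : ℕ, (k : ℝ) * p k * (v - 1) = m * (v - 1) := (hm.mul_right (v - 1)).tsum_eq
  rw [← h2, ← h3]
  refine Summable.tsum_le_tsum (fun k => ?_) (hm.summable.mul_right _) h1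
  have hb := one_add_mul_le_pow (show (-2:ℝ) ≤ v - 1 by linarith) k
  have hv' : (1 + (v - 1)) ^ k = v ^ k := by ring_nf
  rw [hv'] at hb
  calc (k : ℝ) * p k * (v - 1) = p k * ((k : ℝ) * (v - 1)) := by ring
    _ ≤ p k * (v ^ k - 1) := mul_le_mul_of_nonneg_left (by linarith) (hp k)
    _ = p k * v ^ k - p k := by ring

/-- With the notation of the subcritical branching setup: let `g : [0,∞) → (0,1]`
be differentiable with `g(0) = 1` and `g′(t) = −Φ(g(t))` for all `t ≥ 0`. Then the
limit `L := lim_{t→∞} e^{αt} g(t)` exists in `[0,1]`; moreover `L > 0` if and only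
if `∫_0^∞ φ(g(s)) ds < ∞`, in which case `L = exp( −∫_0^∞ φ(g(s)) ds )`. -/
theorem stmt14 (p : ℕ → ℝ) (hp : ∀ k, 0 ≤ p k) (hsum : HasSum p 1)
    (m : ℝ) (hm : HasSum (fun k : ℕ => (k : ℝ) * p k) m) (hm0 : 0 < m) (hm1 : m < 1)
    (β : ℝ) (hβ : 0 < β) (α : ℝ) (hα : α = β * (1 - m))
    (Φ : ℝ → ℝ)
    (hΦ : ∀ u ∈ Set.Icc (0:ℝ) 1,
      Φ u = β * ((∑' k : ℕ, p k * (1 - u) ^ k) - (1 - u)))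
    (φ : ℝ → ℝ) (hφ0 : φ 0 = 0)
    (hφ : ∀ u ∈ Set.Ioc (0:ℝ) 1, φ u = Φ u / u - α)
    (g : ℝ → ℝ) (hg0 : g 0 = 1) (hgmem : ∀ t : ℝ, 0 ≤ t → g t ∈ Set.Ioc (0:ℝ) 1)
    (hgderiv : ∀ t : ℝ, 0 ≤ t → HasDerivAt g (-(Φ (g t))) t) :
    ∃ L ∈ Set.Icc (0:ℝ) 1,
      Tendsto (fun t : ℝ => Real.exp (α * t) * g t) atTop (nhds L) ∧
      (0 < L ↔ (∫⁻ s in Set.Ioi (0:ℝ), ENNReal.ofReal (φ (g s))) < ⊤) ∧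
      ((∫⁻ s in Set.Ioi (0:ℝ), ENNReal.ofReal (φ (g s))) < ⊤ →
        L = Real.exp (-(∫ s in Set.Ioi (0:ℝ), φ (g s)))) := by
  set ψ : ℝ → ℝ := fun s => φ (g s) with hψdef
  set F : ℝ → ℝ := fun t => ∫ s in (0:ℝ)..t, ψ s with hFdef
  -- φ is nonnegative on (0,1]
  have hφnn : ∀ u ∈ Set.Ioc (0:ℝ) 1, 0 ≤ φ u := by
    intro u hu
    rw [hφ u hu]
    have hv : (1 - u) ∈ Set.Icc (0:ℝ) 1 := ⟨by linarith [hu.2], by linarith [hu.1]⟩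
    have key := aux_ineq p hp hsum m hm (1 - u) hv
    have hΦu : α * u ≤ Φ u := by
      rw [hΦ u ⟨le_of_lt hu.1, hu.2⟩, hα]
      nlinarith [mul_le_mul_of_nonneg_left key hβ.le]
    rw [sub_nonneg, le_div_iff₀ hu.1]
    linarith
  have hψnn : ∀ s : ℝ, 0 ≤ s → 0 ≤ ψ s := fun s hs => hφnn _ (hgmem s hs)
  -- continuity of ψ on [0,∞)
  have hgcont : ContinuousOn g (Set.Ici 0) := fun t ht =>
    ((hgderiv t ht).continuousAt).continuousWithinAt
  have hψcont : ContinuousOn ψ (Set.Ici 0) := by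
    have h1 : ContinuousOn
        (fun s => β * ((∑' k : ℕ, p k * (1 - g s) ^ k) - (1 - g s)) / g s - α)
        (Set.Ici 0) := by
      refine ContinuousOn.sub (ContinuousOn.div ?_ hgcont
        (fun s hs => ne_of_gt (hgmem s hs).1)) continuousOn_const
      refine continuousOn_const.mul (ContinuousOn.sub ?_ (continuousOn_const.sub hgcont))
      exact (aux_cont p hp hsum.summable).comp (continuousOn_const.sub hgcont)
        (fun s hs => ⟨by linarith [(hgmem s hs).2], by linarith [(hgmem s hs).1]⟩)
    refine h1.congr (fun s hs => ?_)
    rw [hψdef]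
    simp only
    rw [hφ (g s) (hgmem s hs), hΦ (g s) ⟨(hgmem s hs).1.le, (hgmem s hs).2⟩]
  have hψii : ∀ a b : ℝ, 0 ≤ a → 0 ≤ b → IntervalIntegrable ψ volume a b := by
    intro a b ha hb
    refine (hψcont.mono ?_).intervalIntegrable
    intro x hx
    exact Set.mem_Ici.mpr (le_trans (le_min ha hb) hx.1)
  -- the key FTC identity
  have key : ∀ t : ℝ, 0 ≤ t → Real.exp (α * t) * g t = Real.exp (-(F t)) := by
    intro t ht
    have hder : ∀ s ∈ Set.uIcc (0:ℝ) t,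
        HasDerivAt (fun x => α * x + Real.log (g x)) (-(ψ s)) s := by
      intro s hs
      rw [Set.uIcc_of_le ht] at hs
      have hs0 : 0 ≤ s := hs.1
      have hgs := hgmem s hs0
      have h1 : HasDerivAt (fun x => Real.log (g x)) ((g s)⁻¹ * -(Φ (g s))) s :=
        (Real.hasDerivAt_log (ne_of_gt hgs.1)).comp s (hgderiv s hs0)
      have h2 : HasDerivAt (fun x : ℝ => α * x) α s := by
        simpa using (hasDerivAt_id s).const_mul α
      have h3 := h2.add h1
      refine h3.congr_deriv ?_
      rw [hψdef]
      simp only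
      rw [hφ (g s) hgs]
      field_simp
      ring
    have hint : IntervalIntegrable (fun s => -(ψ s)) volume 0 t := (hψii 0 t le_rfl ht).neg
    have hftc := intervalIntegral.integral_eq_sub_of_hasDerivAt hder hint
    have hFt : -(F t) = α * t + Real.log (g t) := by
      rw [intervalIntegral.integral_neg, hg0, Real.log_one] at hftc
      rw [hFdef]
      simp only
      linarith [hftc]
    rw [hFt, Real.exp_add, Real.exp_log (hgmem t ht).1]
  -- monotonicity of F on [0,∞)
  have hFmono : MonotoneOn F (Set.Ici 0) := by
    intro a ha b hb hab
    have ha' : (0:ℝ) ≤ a := ha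
    have hb' : (0:ℝ) ≤ b := hb
    have hadd := intervalIntegral.integral_add_adjacent_intervals
      (hψii 0 a le_rfl ha') (hψii a b ha' hb')
    have hnn : 0 ≤ ∫ s in a..b, ψ s :=
      intervalIntegral.integral_nonneg hab (fun s hs => hψnn s (le_trans ha' hs.1))
    rw [hFdef]
    simp only
    linarith [hadd, hnn]
  have hψms : AEStronglyMeasurable ψ (volume.restrict (Set.Ioi 0)) :=
    (hψcont.mono Set.Ioi_subset_Ici_self).aestronglyMeasurable measurableSet_Ioi
  have hSnorm : (∫⁻ s in Set.Ioi (0:ℝ), ENNReal.ofReal (ψ s))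
      = ∫⁻ s in Set.Ioi (0:ℝ), (‖ψ s‖₊ : ℝ≥0∞) := by
    refine setLIntegral_congr_fun measurableSet_Ioi (fun s hs => ?_)
    exact (Real.enorm_eq_ofReal (hψnn s hs.le)).symm
  by_cases hS : (∫⁻ s in Set.Ioi (0:ℝ), ENNReal.ofReal (ψ s)) < ⊤
  · -- finite case
    have hInt : IntegrableOn ψ (Set.Ioi 0) := by
      refine ⟨hψms, ?_⟩
      rw [hasFiniteIntegral_def]
      exact lt_of_eq_of_lt hSnorm.symm hS
    have htend0 := intervalIntegral_tendsto_integral_Ioi 0 hInt (tendsto_id (x := atTop (α := ℝ)))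
    have htend : Tendsto F atTop (𝓝 (∫ s in Set.Ioi (0:ℝ), ψ s)) := by
      rw [hFdef]
      simpa using htend0
    have h0 : 0 ≤ ∫ s in Set.Ioi (0:ℝ), ψ s :=
      setIntegral_nonneg measurableSet_Ioi (fun s hs => hψnn s (le_of_lt hs))
    refine ⟨Real.exp (-(∫ s in Set.Ioi (0:ℝ), ψ s)), ⟨(Real.exp_pos _).le, ?_⟩, ?_, ?_, ?_⟩
    · calc Real.exp (-(∫ s in Set.Ioi (0:ℝ), ψ s)) ≤ Real.exp 0 :=
          Real.exp_le_exp.mpr (by linarith)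
        _ = 1 := Real.exp_zero
    · have h1 : Tendsto (fun t => Real.exp (-(F t))) atTop
          (𝓝 (Real.exp (-(∫ s in Set.Ioi (0:ℝ), ψ s)))) :=
        (Real.continuous_exp.tendsto _).comp htend.neg
      refine Filter.Tendsto.congr' ?_ h1
      filter_upwards [eventually_ge_atTop (0:ℝ)] with t ht
      exact (key t ht).symm
    · exact ⟨fun _ => hS, fun _ => Real.exp_pos _⟩
    · exact fun _ => rfl
  · -- infinite case
    refine ⟨0, ⟨le_rfl, zero_le_one⟩, ?_, ⟨fun h => (lt_irrefl 0 h).elim, fun h => absurd h hS⟩,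
      fun h => absurd h hS⟩
    have hub : ∀ C : ℝ, ∃ t, 0 ≤ t ∧ C < F t := by
      by_contra hcon
      push_neg at hcon
      obtain ⟨C, hC⟩ := hcon
      have hfi : ∀ i : ℝ, IntegrableOn ψ (Set.Ioc 0 i) := by
        intro i
        rcases le_or_gt i 0 with hi | hi
        · rw [Set.Ioc_eq_empty (by simpa using hi)]
          exact integrableOn_empty
        · exact ((hψii 0 i le_rfl hi.le)).1
      have hIb : ∀ᶠ i : ℝ in atTop, (∫ x in (0:ℝ)..(id i), ‖ψ x‖) ≤ C := by
        filter_upwards [eventually_ge_atTop (0:ℝ)] with i hi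
        have heq : ∫ x in (0:ℝ)..i, ‖ψ x‖ = F i := by
          rw [hFdef]
          simp only
          refine intervalIntegral.integral_congr (fun x hx => ?_)
          rw [Set.uIcc_of_le hi] at hx
          exact Real.norm_of_nonneg (hψnn x hx.1)
        rw [id, heq]
        exact hC i hi
      have hInt : IntegrableOn ψ (Set.Ioi 0) :=
        integrableOn_Ioi_of_intervalIntegral_norm_bounded C 0 hfi tendsto_id hIb
      have h2 := hInt.2
      rw [hasFiniteIntegral_def] at h2
      exact hS (lt_of_eq_of_lt hSnorm h2)
    have hFtend : Tendsto F atTop atTop := by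
      rw [tendsto_atTop]
      intro C
      obtain ⟨t₀, ht₀, hC⟩ := hub C
      filter_upwards [eventually_ge_atTop t₀] with t ht
      exact le_of_lt (lt_of_lt_of_le hC (hFmono (Set.mem_Ici.mpr ht₀)
        (Set.mem_Ici.mpr (le_trans ht₀ ht)) ht))
    have h1 : Tendsto (fun t => Real.exp (-(F t))) atTop (𝓝 0) :=
      Real.tendsto_exp_atBot.comp (tendsto_neg_atTop_atBot.comp hFtend)
    refine Filter.Tendsto.congr' ?_ h1
    filter_upwards [eventually_ge_atTop (0:ℝ)] with t ht
    exact (key t ht).symm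
end
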